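/- For the real map f(x) = e^{−λx} with λ > 0: (i) f has a unique fixed point M = M(λ) in (0,1); (ii) if 0 < λ ≤ e then M is a global attractor, i.e., fⁿ(x) → M for every x ≥ 0 (equivalently f(f(x)) − x has the same sign as M − x for x ≠ M); (iii) if λ > e then |f'(M)| > 1, M is repelling, and f has a period-2 orbit {L, U} with L < M < U which attracts every x ≠ M. The critical transition occurs at λ = e, M = 1/e, where f'(M) = −1. -/

import Mathlib

open Filter Real Set

namespace S19

noncomputable def f (lam x : ℝ) : ℝ := Real.exp (-(lam * x))
noncomputable def G (lam x : ℝ) : ℝ := f lam (f lam x) - x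

variable {lam : ℝ}

lemma f_pos (x : ℝ) : 0 < f lam x := Real.exp_pos _

lemma f_cont : Continuous (f lam) := by
  unfold f; fun_prop

lemma f_strictAnti (hlam : 0 < lam) : StrictAnti (f lam) := fun x y h => by
  unfold f
  exact Real.exp_lt_exp.2 (by nlinarith)

lemma f_le_one (hlam : 0 < lam) {x : ℝ} (hx : 0 ≤ x) : f lam x ≤ 1 := by
  unfold f
  rw [show (1:ℝ) = Real.exp 0 by simp]
  exact Real.exp_le_exp.2 (by nlinarith)

lemma hasDerivAt_f (x : ℝ) : HasDerivAt (f lam) (-(lam * f lam x)) x := by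
  have h1 : HasDerivAt (fun y : ℝ => -(lam * y)) (-lam) x := by
    simpa [Pi.neg_def] using ((hasDerivAt_id x).const_mul lam).neg
  unfold f
  simpa [Function.comp_def, mul_comm] using (Real.hasDerivAt_exp (-(lam * x))).comp x h1

lemma hasDerivAt_G (x : ℝ) :
    HasDerivAt (G lam) (lam ^ 2 * f lam x * f lam (f lam x) - 1) x := by
  have h1 : HasDerivAt (fun y => f lam (f lam y))
      ((-(lam * f lam (f lam x))) * (-(lam * f lam x))) x :=
    (hasDerivAt_f (f lam x)).comp x (hasDerivAt_f x)
  have := h1.sub (hasDerivAt_id x)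
  exact this.congr_deriv (by ring)

lemma g2_mono (hlam : 0 < lam) : StrictMono (fun x => f lam (f lam x)) :=
  fun x y h => (f_strictAnti hlam) ((f_strictAnti hlam) h)



-- iteration lemmas

lemma tendsto_iter_of_le (g : ℝ → ℝ) (hc : Continuous g) (hm : Monotone g) {p x : ℝ}
    (hp : g p = p) (hxp : x ≤ p) (hxg : x ≤ g x)
    (huniq : ∀ c, x ≤ c → c ≤ p → g c = c → c = p) :
    Tendsto (fun n => g^[n] x) atTop (nhds p) := by
  set a : ℕ → ℝ := fun n => g^[n] x with ha
  have hsucc : ∀ n, a (n + 1) = g (a n) := fun n => Function.iterate_succ_apply' g n x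
  have hle : ∀ n, a n ≤ g (a n) := by
    intro n; induction n with
    | zero => exact hxg
    | succ n ih => rw [hsucc]; exact hm ih
  have hmono : Monotone a := monotone_nat_of_le_succ (fun n => by rw [hsucc]; exact hle n)
  have hbdd : ∀ n, a n ≤ p := by
    intro n; induction n with
    | zero => exact hxp
    | succ n ih => rw [hsucc, ← hp]; exact hm ih
  have hbdd' : BddAbove (Set.range a) := ⟨p, by rintro _ ⟨n, rfl⟩; exact hbdd n⟩
  set c := ⨆ n, a n with hc'
  have htend : Tendsto a atTop (nhds c) := tendsto_atTop_ciSup hmono hbdd'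
  have h1 : Tendsto (fun n => a (n + 1)) atTop (nhds c) :=
    htend.comp (tendsto_add_atTop_nat 1)
  have h2 : Tendsto (fun n => g (a n)) atTop (nhds (g c)) :=
    (hc.continuousAt.tendsto).comp htend
  have hgc : g c = c := tendsto_nhds_unique (by simpa [hsucc] using h2) h1
  have hxc : x ≤ c := le_ciSup hbdd' 0
  have hcp : c ≤ p := ciSup_le hbdd
  have : c = p := huniq c hxc hcp hgc
  rwa [this] at htend

lemma tendsto_iter_of_ge (g : ℝ → ℝ) (hc : Continuous g) (hm : Monotone g) {p x : ℝ}
    (hp : g p = p) (hxp : p ≤ x) (hxg : g x ≤ x)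
    (huniq : ∀ c, p ≤ c → c ≤ x → g c = c → c = p) :
    Tendsto (fun n => g^[n] x) atTop (nhds p) := by
  set a : ℕ → ℝ := fun n => g^[n] x with ha
  have hsucc : ∀ n, a (n + 1) = g (a n) := fun n => Function.iterate_succ_apply' g n x
  have hle : ∀ n, g (a n) ≤ a n := by
    intro n; induction n with
    | zero => exact hxg
    | succ n ih => rw [hsucc]; exact hm ih
  have hmono : Antitone a := antitone_nat_of_succ_le (fun n => by rw [hsucc]; exact hle n)
  have hbdd : ∀ n, p ≤ a n := by
    intro n; induction n with
    | zero => exact hxp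
    | succ n ih => rw [hsucc, ← hp]; exact hm ih
  have hbdd' : BddBelow (Set.range a) := ⟨p, by rintro _ ⟨n, rfl⟩; exact hbdd n⟩
  set c := ⨅ n, a n with hc'
  have htend : Tendsto a atTop (nhds c) := tendsto_atTop_ciInf hmono hbdd'
  have h1 : Tendsto (fun n => a (n + 1)) atTop (nhds c) :=
    htend.comp (tendsto_add_atTop_nat 1)
  have h2 : Tendsto (fun n => g (a n)) atTop (nhds (g c)) :=
    (hc.continuousAt.tendsto).comp htend
  have hgc : g c = c := tendsto_nhds_unique (by simpa [hsucc] using h2) h1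
  have hxc : c ≤ x := ciInf_le hbdd' 0
  have hcp : p ≤ c := le_ciInf hbdd
  have : c = p := huniq c hcp hxc hgc
  rwa [this] at htend

lemma tendsto_even_odd {a : ℕ → ℝ} {c : ℝ}
    (h0 : Tendsto (fun n => a (2 * n)) atTop (nhds c))
    (h1 : Tendsto (fun n => a (2 * n + 1)) atTop (nhds c)) :
    Tendsto a atTop (nhds c) := by
  rw [Metric.tendsto_atTop] at h0 h1 ⊢
  intro ε hε
  obtain ⟨N0, h0⟩ := h0 ε hε
  obtain ⟨N1, h1⟩ := h1 ε hε
  refine ⟨2 * max N0 N1 + 2, fun n hn => ?_⟩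
  rcases Nat.even_or_odd n with ⟨k, hk⟩ | ⟨k, hk⟩
  · have : n = 2 * k := by omega
    rw [this]; exact h0 k (by omega)
  · have : n = 2 * k + 1 := by omega
    rw [this]; exact h1 k (by omega)



lemma exists_M (hlam : 0 < lam) : ∃ M ∈ Ioo (0:ℝ) 1, f lam M = M := by
  have hF : ContinuousOn (fun x => f lam x - x) (Icc (0:ℝ) 1) :=
    (f_cont.sub continuous_id).continuousOn
  have h0 : f lam 0 - 0 = 1 := by simp [f]
  have h1 : f lam 1 - 1 < 0 := by
    have : f lam 1 < 1 := by
      unfold f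
      calc Real.exp (-(lam * 1)) < Real.exp 0 := Real.exp_lt_exp.2 (by nlinarith)
        _ = 1 := Real.exp_zero
    linarith
  have := intermediate_value_Ioo' (le_of_lt one_pos) hF (a := 0) (b := 1)
  have h2 : (0:ℝ) ∈ Ioo (f lam 1 - 1) (f lam 0 - 0) := by
    constructor
    · exact h1
    · rw [h0]; norm_num
  obtain ⟨M, hM, hMeq⟩ := this h2
  simp only at hMeq
  exact ⟨M, hM, by linarith⟩

lemma F_strictAnti (hlam : 0 < lam) : StrictAnti (fun x => f lam x - x) :=
  fun x y h => by
    have := f_strictAnti hlam h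
    simp only
    linarith

lemma M_uniq (hlam : 0 < lam) {M M' : ℝ} (hM : f lam M = M) (hM' : f lam M' = M') :
    M' = M := by
  rcases lt_trichotomy M' M with h | h | h
  · have := F_strictAnti hlam h; simp only at this; rw [hM, hM'] at this; linarith
  · exact h
  · have := F_strictAnti hlam h; simp only at this; rw [hM, hM'] at this; linarith

lemma lt_M_iff (hlam : 0 < lam) {M x : ℝ} (hM : f lam M = M) :
    x < M ↔ x < f lam x := by
  constructor
  · intro h
    have := F_strictAnti hlam h; simp only at this; rw [hM] at this; linarith
  · intro h
    by_contra hc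
    push_neg at hc
    rcases eq_or_lt_of_le hc with rfl | hc'
    · rw [hM] at h; exact lt_irrefl _ h
    · have := F_strictAnti hlam hc'; simp only at this; rw [hM] at this; linarith

/-- key inequality: `lam*(x + f x) ≥ 1 + log lam`, strict unless `lam*x = log lam`. -/
lemma q_lower (hlam : 0 < lam) (x : ℝ) :
    1 + Real.log lam ≤ lam * x + lam * f lam x := by
  have h : lam * f lam x = Real.exp (Real.log lam - lam * x) := by
    rw [Real.exp_sub, Real.exp_log hlam]
    unfold f
    rw [Real.exp_neg]
    field_simp
  have h2 := Real.add_one_le_exp (Real.log lam - lam * x)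
  rw [← h] at h2
  linarith

lemma q_lower_strict (hlam : 0 < lam) {x : ℝ} (hx : lam * x ≠ Real.log lam) :
    1 + Real.log lam < lam * x + lam * f lam x := by
  have h : lam * f lam x = Real.exp (Real.log lam - lam * x) := by
    rw [Real.exp_sub, Real.exp_log hlam]
    unfold f
    rw [Real.exp_neg]
    field_simp
  have h2 := Real.add_one_lt_exp (x := Real.log lam - lam * x) (by intro hc; apply hx; linarith)
  rw [← h] at h2
  linarith

/-- rewrite of the derivative factor -/
lemma deriv_factor_eq (hlam : 0 < lam) (x : ℝ) :
    lam ^ 2 * f lam x * f lam (f lam x)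
      = Real.exp (2 * Real.log lam - (lam * x + lam * f lam x)) := by
  have h1 : lam ^ 2 = Real.exp (2 * Real.log lam) := by
    rw [two_mul, Real.exp_add, Real.exp_log hlam]; ring
  unfold f
  rw [h1, ← Real.exp_add, ← Real.exp_add]
  ring_nf

lemma deriv_G_neg (hlam : 0 < lam) (he : lam ≤ Real.exp 1) {x : ℝ}
    (hx : x ≠ Real.log lam / lam) : deriv (G lam) x < 0 := by
  rw [(hasDerivAt_G x).deriv]
  have hlog : Real.log lam ≤ 1 := (Real.log_le_iff_le_exp hlam).2 he
  have hxl : lam * x ≠ Real.log lam := by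
    intro hc; apply hx
    rw [eq_div_iff hlam.ne']
    linarith [hc]
  have h1 := q_lower_strict hlam hxl
  have h2 : 2 * Real.log lam - (lam * x + lam * f lam x) < 0 := by linarith
  have h3 : lam ^ 2 * f lam x * f lam (f lam x) < 1 := by
    rw [deriv_factor_eq hlam x]
    calc Real.exp _ < Real.exp 0 := Real.exp_lt_exp.2 h2
    _ = 1 := Real.exp_zero
  linarith

lemma strictAnti_glue {g : ℝ → ℝ} {t : ℝ} (h1 : StrictAntiOn g (Iic t))
    (h2 : StrictAntiOn g (Ici t)) : StrictAnti g := by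
  intro x y hxy
  rcases le_total y t with h | h
  · exact h1 (mem_Iic.2 (le_of_lt (lt_of_lt_of_le hxy h))) (mem_Iic.2 h) hxy
  · rcases le_total t x with h' | h'
    · exact h2 (mem_Ici.2 h') (mem_Ici.2 (le_trans h' (le_of_lt hxy))) hxy
    · rcases eq_or_lt_of_le h' with rfl | hxt
      · exact h2 (mem_Ici.2 le_rfl) (mem_Ici.2 h) hxy
      · have h3 : g t < g x := h1 (mem_Iic.2 hxt.le) (mem_Iic.2 le_rfl) hxt
        have h4 : g y ≤ g t := by
          rcases eq_or_lt_of_le h with rfl | hty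
          · exact le_rfl
          · exact (h2 (mem_Ici.2 le_rfl) (mem_Ici.2 hty.le) hty).le
        linarith

lemma G_strictAnti (hlam : 0 < lam) (he : lam ≤ Real.exp 1) : StrictAnti (G lam) := by
  set t := Real.log lam / lam
  have hGc : Continuous (G lam) := ((f_cont.comp f_cont).sub continuous_id)
  have h1 : StrictAntiOn (G lam) (Iic t) := by
    apply strictAntiOn_of_deriv_neg (convex_Iic t) hGc.continuousOn
    intro x hx
    rw [interior_Iic] at hx
    exact deriv_G_neg hlam he (ne_of_lt hx)
  have h2 : StrictAntiOn (G lam) (Ici t) := by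
    apply strictAntiOn_of_deriv_neg (convex_Ici t) hGc.continuousOn
    intro x hx
    rw [interior_Ici] at hx
    exact deriv_G_neg hlam he (ne_of_gt hx)
  exact strictAnti_glue h1 h2


lemma g2_cont : Continuous (fun x => f lam (f lam x)) := f_cont.comp f_cont

lemma iter_even (x : ℝ) (n : ℕ) :
    (f lam)^[2 * n] x = (fun y => f lam (f lam y))^[n] x := by
  rw [Function.iterate_mul]
  congr 1

lemma iter_odd (x : ℝ) (n : ℕ) :
    (f lam)^[2 * n + 1] x = f lam ((fun y => f lam (f lam y))^[n] x) := by
  rw [Function.iterate_succ_apply', iter_even]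

lemma G_M_eq {M : ℝ} (hM : f lam M = M) : G lam M = 0 := by
  unfold G; rw [hM, hM]; ring

/-- even-iterate convergence to M for lam ≤ e, any x -/
lemma conv_g2_le (hlam : 0 < lam) (he : lam ≤ Real.exp 1) {M : ℝ} (hM : f lam M = M)
    (x : ℝ) : Tendsto (fun n => (fun y => f lam (f lam y))^[n] x) atTop (nhds M) := by
  have hGa := G_strictAnti hlam he
  have hGM : G lam M = 0 := G_M_eq hM
  have hmono : Monotone (fun y => f lam (f lam y)) := (g2_mono hlam).monotone
  have hfp : f lam (f lam M) = M := by rw [hM, hM]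
  have huniq : ∀ c, f lam (f lam c) = c → c = M := by
    intro c hc
    have : G lam c = 0 := by unfold G; rw [hc]; ring
    exact hGa.injective (by rw [this, hGM])
  rcases le_total x M with h | h
  · refine tendsto_iter_of_le _ g2_cont hmono hfp h ?_ (fun c _ _ hc => huniq c hc)
    have : G lam M ≤ G lam x := hGa.antitone h
    rw [hGM] at this
    unfold G at this
    linarith
  · refine tendsto_iter_of_ge _ g2_cont hmono hfp h ?_ (fun c _ _ hc => huniq c hc)
    have : G lam x ≤ G lam M := hGa.antitone h
    rw [hGM] at this
    unfold G at this
    linarith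

lemma conv_le (hlam : 0 < lam) (he : lam ≤ Real.exp 1) {M : ℝ} (hM : f lam M = M)
    (x : ℝ) : Tendsto (fun n => (f lam)^[n] x) atTop (nhds M) := by
  apply tendsto_even_odd
  · simpa only [iter_even] using conv_g2_le hlam he hM x
  · simp only [iter_odd]
    have h1 := ((f_cont (lam := lam)).continuousAt (x := M)).tendsto.comp (conv_g2_le hlam he hM x)
    rw [hM] at h1
    exact h1


lemma two_log_lt (hlam : 0 < lam) : 2 * Real.log lam < lam := by
  set s := Real.log lam with hs
  have hes : Real.exp s = lam := Real.exp_log hlam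
  rcases le_or_gt s 0 with h | h
  · nlinarith [Real.exp_pos s]
  · have h1 : s / 2 + 1 < Real.exp (s / 2) := Real.add_one_lt_exp (by positivity)
    have h2 : Real.exp s = Real.exp (s / 2) * Real.exp (s / 2) := by
      rw [← Real.exp_add]; ring_nf
    nlinarith [sq_nonneg (s / 2 - 1), Real.exp_pos (s / 2)]

lemma Gd_neg (hlam : 0 < lam) {x : ℝ}
    (h : 2 * Real.log lam < lam * x + lam * f lam x) : deriv (G lam) x < 0 := by
  rw [(hasDerivAt_G x).deriv]
  have h3 : lam ^ 2 * f lam x * f lam (f lam x) < 1 := by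
    rw [deriv_factor_eq hlam x]
    calc Real.exp _ < Real.exp 0 := Real.exp_lt_exp.2 (by linarith)
      _ = 1 := Real.exp_zero
  linarith

lemma Gd_pos (hlam : 0 < lam) {x : ℝ}
    (h : lam * x + lam * f lam x < 2 * Real.log lam) : 0 < deriv (G lam) x := by
  rw [(hasDerivAt_G x).deriv]
  have h3 : 1 < lam ^ 2 * f lam x * f lam (f lam x) := by
    rw [deriv_factor_eq hlam x]
    calc (1:ℝ) = Real.exp 0 := Real.exp_zero.symm
      _ < Real.exp _ := Real.exp_lt_exp.2 (by linarith)
  linarith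

lemma Gd_nonpos (hlam : 0 < lam) {x : ℝ}
    (h : 2 * Real.log lam ≤ lam * x + lam * f lam x) : deriv (G lam) x ≤ 0 := by
  rw [(hasDerivAt_G x).deriv]
  have h3 : lam ^ 2 * f lam x * f lam (f lam x) ≤ 1 := by
    rw [deriv_factor_eq hlam x]
    calc Real.exp _ ≤ Real.exp 0 := Real.exp_le_exp.2 (by linarith)
      _ = 1 := Real.exp_zero
  linarith

lemma hasDerivAt_q (x : ℝ) :
    HasDerivAt (fun y => y + f lam y) (1 + -(lam * f lam x)) x :=
  (hasDerivAt_id x).add (hasDerivAt_f x)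

lemma q_cont : Continuous (fun y : ℝ => y + f lam y) := continuous_id.add f_cont

lemma f_x0 (hlam : 0 < lam) : f lam (Real.log lam / lam) = 1 / lam := by
  have h : lam * (Real.log lam / lam) = Real.log lam := by field_simp
  unfold f
  rw [h, Real.exp_neg, Real.exp_log hlam, one_div]

lemma q_anti (hlam : 0 < lam) :
    StrictAntiOn (fun y => y + f lam y) (Iic (Real.log lam / lam)) := by
  apply strictAntiOn_of_deriv_neg (convex_Iic _) q_cont.continuousOn
  intro x hx
  rw [interior_Iic] at hx
  rw [(hasDerivAt_q x).deriv]
  have h1 : f lam (Real.log lam / lam) < f lam x := f_strictAnti hlam hx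
  rw [f_x0 hlam] at h1
  rw [div_lt_iff₀ hlam] at h1
  nlinarith

lemma q_mono (hlam : 0 < lam) :
    StrictMonoOn (fun y => y + f lam y) (Ici (Real.log lam / lam)) := by
  apply strictMonoOn_of_deriv_pos (convex_Ici _) q_cont.continuousOn
  intro x hx
  rw [interior_Ici] at hx
  rw [(hasDerivAt_q x).deriv]
  have h1 : f lam x < f lam (Real.log lam / lam) := f_strictAnti hlam hx
  rw [f_x0 hlam] at h1
  rw [lt_div_iff₀ hlam] at h1
  nlinarith

lemma lamM_gt (hlam : 0 < lam) (he : Real.exp 1 < lam) {M : ℝ} (hM : f lam M = M) :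
    1 < lam * M := by
  have h1 : f lam (1 / lam) = Real.exp (-1) := by
    unfold f
    congr 1
    field_simp
  have h2 : 1 / lam < Real.exp (-1) := by
    rw [Real.exp_neg, ← one_div]
    exact one_div_lt_one_div_of_lt (Real.exp_pos 1) he
  have h3 : 1 / lam < M := (lt_M_iff hlam hM).2 (by rw [h1]; exact h2)
  rw [div_lt_iff₀ hlam] at h3
  linarith


lemma G_cont : Continuous (G lam) := g2_cont.sub continuous_id

lemma gt_case (hlam : 0 < lam) (he : Real.exp 1 < lam) {M : ℝ} (hM : f lam M = M)
    (hM0 : 0 < M) (hMl : 1 < lam * M) :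
    ∃ L U : ℝ, 0 < L ∧ L < M ∧ M < U ∧ f lam L = U ∧ f lam U = L ∧
      (∀ x, 0 ≤ x → x < L → 0 < G lam x) ∧
      (∀ x, L < x → x < M → G lam x < 0) ∧
      (∀ x, M < x → x < U → 0 < G lam x) ∧
      (∀ x, U < x → G lam x < 0) := by
  have hlog : 1 < Real.log lam := (Real.lt_log_iff_exp_lt hlam).2 he
  have hl1 : 2 < lam := by nlinarith [Real.add_one_le_exp (Real.log lam), Real.exp_log hlam]
  set x₀ := Real.log lam / lam with hx₀def
  have hx₀pos : 0 < x₀ := div_pos (by linarith) hlam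
  have hx₀eq : lam * x₀ = Real.log lam := by rw [hx₀def]; field_simp
  have hT : 2 * Real.log lam < lam := two_log_lt hlam
  have hqcont : Continuous (fun y : ℝ => lam * (y + f lam y)) := continuous_const.mul q_cont
  have hq0 : lam * ((0:ℝ) + f lam 0) = lam := by unfold f; simp
  have hqx₀ : lam * (x₀ + f lam x₀) = Real.log lam + 1 := by
    rw [f_x0 hlam, mul_add, hx₀eq]
    field_simp
  -- find a
  obtain ⟨a, haIoo, haeq⟩ :
      ∃ a ∈ Ioo 0 x₀, lam * (a + f lam a) = 2 * Real.log lam := by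
    have := intermediate_value_Ioo' hx₀pos.le hqcont.continuousOn
      (a := 0) (b := x₀) (show 2 * Real.log lam ∈
        Ioo (lam * (x₀ + f lam x₀)) (lam * ((0:ℝ) + f lam 0)) by
          rw [hqx₀, hq0]; constructor <;> linarith)
    obtain ⟨a, ha, haeq⟩ := this
    exact ⟨a, ha, haeq⟩
  -- find b
  set R := x₀ + 2 * Real.log lam with hRdef
  have hRgt : x₀ < R := by rw [hRdef]; linarith
  obtain ⟨b, hbIoo, hbeq⟩ :
      ∃ b ∈ Ioo x₀ R, lam * (b + f lam b) = 2 * Real.log lam := by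
    have hqR : 2 * Real.log lam < lam * (R + f lam R) := by
      have hfR : 0 < f lam R := f_pos R
      have : lam * R = Real.log lam + 2 * lam * Real.log lam := by
        rw [hRdef]; rw [mul_add, hx₀eq]; ring
      nlinarith
    have := intermediate_value_Ioo hRgt.le hqcont.continuousOn
      (a := x₀) (b := R) (show 2 * Real.log lam ∈
        Ioo (lam * (x₀ + f lam x₀)) (lam * (R + f lam R)) by
          rw [hqx₀]; constructor <;> linarith)
    obtain ⟨b, hb, hbeq⟩ := this
    exact ⟨b, hb, hbeq⟩
  have ha0 := haIoo.1
  have hax₀ := haIoo.2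
  have hx₀b := hbIoo.1
  have hab : a < b := lt_trans hax₀ hx₀b
  -- q sign facts
  have hqgl : ∀ x, 0 ≤ x → x < a → 2 * Real.log lam < lam * (x + f lam x) := by
    intro x hx0 hxa
    have := q_anti hlam (mem_Iic.2 (le_of_lt (lt_trans hxa hax₀)))
      (mem_Iic.2 hax₀.le) hxa
    have h2 : a + f lam a < x + f lam x := this
    nlinarith
  have hqlm : ∀ x, a < x → x < b → lam * (x + f lam x) < 2 * Real.log lam := by
    intro x hax hxb
    rcases le_total x x₀ with h | h
    · have := q_anti hlam (mem_Iic.2 hax₀.le) (mem_Iic.2 h) hax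
      have h2 : x + f lam x < a + f lam a := this
      nlinarith
    · have := q_mono hlam (mem_Ici.2 h) (mem_Ici.2 hx₀b.le) hxb
      have h2 : x + f lam x < b + f lam b := this
      nlinarith
  have hqgr : ∀ x, b < x → 2 * Real.log lam < lam * (x + f lam x) := by
    intro x hbx
    have := q_mono hlam (mem_Ici.2 hx₀b.le)
      (mem_Ici.2 (le_of_lt (lt_trans hx₀b hbx))) hbx
    have h2 : b + f lam b < x + f lam x := this
    nlinarith
  -- monotone pieces of G
  have GA1 : StrictAntiOn (G lam) (Icc 0 a) := by
    apply strictAntiOn_of_deriv_neg (convex_Icc 0 a) G_cont.continuousOn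
    intro x hx
    rw [interior_Icc] at hx
    exact Gd_neg hlam (hqgl x hx.1.le hx.2 |>.trans_le (by rw [mul_add]))
  have GM2 : StrictMonoOn (G lam) (Icc a b) := by
    apply strictMonoOn_of_deriv_pos (convex_Icc a b) G_cont.continuousOn
    intro x hx
    rw [interior_Icc] at hx
    exact Gd_pos hlam (le_of_eq (by rw [mul_add]) |>.trans_lt (hqlm x hx.1 hx.2))
  have GA3 : StrictAntiOn (G lam) (Ici b) := by
    apply strictAntiOn_of_deriv_neg (convex_Ici b) G_cont.continuousOn
    intro x hx
    rw [interior_Ici] at hx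
    exact Gd_neg hlam (hqgr x hx |>.trans_le (by rw [mul_add]))
  -- position of M
  have hdM : HasDerivAt (G lam) (lam ^ 2 * M * M - 1) M := by
    have h := hasDerivAt_G (lam := lam) M
    rw [hM, hM] at h
    exact h
  have hdMpos : 0 < lam ^ 2 * M * M - 1 := by nlinarith
  have hqM : lam * (M + f lam M) < 2 * Real.log lam := by
    by_contra h
    push_neg at h
    have := Gd_nonpos hlam (le_of_le_of_eq h (mul_add lam M (f lam M)))
    rw [hdM.deriv] at this
    linarith
  have haM : a < M := by
    by_contra h
    push_neg at h
    rcases eq_or_lt_of_le h with rfl | h'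
    · rw [haeq] at hqM; linarith
    · have := hqgl M hM0.le h'
      linarith
  have hMb : M < b := by
    by_contra h
    push_neg at h
    rcases eq_or_lt_of_le h with rfl | h'
    · rw [hbeq] at hqM; linarith
    · have := hqgr M h'
      linarith
  -- G values
  have hGM : G lam M = 0 := G_M_eq hM
  have hG0 : 0 < G lam 0 := by
    have := f_pos (lam := lam) (f lam 0)
    unfold G
    linarith
  -- find L via slope argument
  obtain ⟨L, hL0, hLM, hGL⟩ : ∃ L, 0 < L ∧ L < M ∧ G lam L = 0 := by
    have hslope := hasDerivAt_iff_tendsto_slope.1 hdM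
    have hev : ∀ᶠ t in nhdsWithin M {M}ᶜ, 0 < slope (G lam) M t :=
      hslope.eventually (eventually_gt_nhds hdMpos)
    have hle : nhdsWithin M (Iio M) ≤ nhdsWithin M {M}ᶜ :=
      nhdsWithin_mono M (fun t ht => ne_of_lt ht)
    have hev2 : ∀ᶠ t in nhdsWithin M (Iio M), 0 < slope (G lam) M t := hev.filter_mono hle
    have hmem : Ioo 0 M ∈ nhdsWithin M (Iio M) :=
      Ioo_mem_nhdsLT_of_mem ⟨hM0, le_rfl⟩
    obtain ⟨t, hts, htIoo⟩ := (hev2.and (eventually_of_mem hmem (fun y hy => hy))).exists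
    rw [slope_def_field] at hts
    have htM : t - M < 0 := by linarith [htIoo.2]
    have hGt : G lam t < 0 := by
      rcases div_pos_iff.1 (by rw [hGM] at hts; exact hts) with ⟨h1, h2⟩ | ⟨h1, h2⟩
      · linarith
      · linarith
    have := intermediate_value_Ioo' htIoo.1.le G_cont.continuousOn
      (a := 0) (b := t) (show (0:ℝ) ∈ Ioo (G lam t) (G lam 0) from ⟨hGt, hG0⟩)
    obtain ⟨L, hLIoo, hLeq⟩ := this
    exact ⟨L, hLIoo.1, lt_trans hLIoo.2 htIoo.2, hLeq⟩
  have hfix2L : f lam (f lam L) = L := by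
    have : G lam L = 0 := hGL
    unfold G at this
    linarith
  have hLa : L < a := by
    by_contra h
    push_neg at h
    have := GM2 ⟨h, by linarith⟩ ⟨haM.le, hMb.le⟩ hLM
    rw [hGL, hGM] at this
    linarith
  -- define U
  set U := f lam L with hUdef
  have hMU : M < U := by
    have := f_strictAnti hlam hLM
    rw [hM] at this
    exact this
  have hfUL : f lam U = L := hfix2L
  have hGU : G lam U = 0 := by
    unfold G
    rw [hfUL, ← hUdef, sub_self]
  have hbU : b < U := by
    by_contra h
    push_neg at h
    have := GM2 ⟨haM.le, hMb.le⟩ ⟨by linarith, h⟩ hMU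
    rw [hGU, hGM] at this
    linarith
  refine ⟨L, U, hL0, hLM, hMU, rfl, hfUL, ?_, ?_, ?_, ?_⟩
  · intro x hx0 hxL
    have := GA1 (mem_Icc.2 ⟨hx0, by linarith⟩) (mem_Icc.2 ⟨hL0.le, hLa.le⟩) hxL
    rw [hGL] at this
    linarith
  · intro x hLx hxM
    rcases le_total x a with h | h
    · have := GA1 (mem_Icc.2 ⟨hL0.le, hLa.le⟩) (mem_Icc.2 ⟨by linarith, h⟩) hLx
      rw [hGL] at this
      linarith
    · have := GM2 (mem_Icc.2 ⟨h, by linarith⟩) (mem_Icc.2 ⟨haM.le, hMb.le⟩) hxM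
      rw [hGM] at this
      linarith
  · intro x hMx hxU
    rcases le_total x b with h | h
    · have := GM2 (mem_Icc.2 ⟨haM.le, hMb.le⟩) (mem_Icc.2 ⟨by linarith, h⟩) hMx
      rw [hGM] at this
      linarith
    · have := GA3 (mem_Ici.2 h) (mem_Ici.2 (by linarith : b ≤ U)) hxU
      rw [hGU] at this
      linarith
  · intro x hUx
    have := GA3 (mem_Ici.2 hbU.le) (mem_Ici.2 (by linarith : b ≤ x)) hUx
    rw [hGU] at this
    linarith


lemma conv_g2_attract (hlam : 0 < lam) {p x : ℝ} (hp : f lam (f lam p) = p)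
    (hsl : ∀ c, x ≤ c → c < p → 0 < G lam c)
    (hsr : ∀ c, p < c → c ≤ x → G lam c < 0) :
    Tendsto (fun n => (fun y => f lam (f lam y))^[n] x) atTop (nhds p) := by
  have hmono : Monotone (fun y => f lam (f lam y)) := (g2_mono hlam).monotone
  rcases le_total x p with h | h
  · refine tendsto_iter_of_le _ g2_cont hmono hp h ?_ ?_
    · rcases eq_or_lt_of_le h with rfl | h'
      · rw [hp]
      · have := hsl x le_rfl h'
        unfold G at this
        linarith
    · intro c hxc hcp hc
      by_contra hne
      have := hsl c hxc (lt_of_le_of_ne hcp hne)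
      unfold G at this
      rw [hc] at this
      linarith
  · refine tendsto_iter_of_ge _ g2_cont hmono hp h ?_ ?_
    · rcases eq_or_lt_of_le h with rfl | h'
      · rw [hp]
      · have := hsr x h' le_rfl
        unfold G at this
        linarith
    · intro c hpc hcx hc
      by_contra hne
      have := hsr c (lt_of_le_of_ne hpc (Ne.symm hne)) hcx
      unfold G at this
      rw [hc] at this
      linarith

end S19

open S19 in
theorem stmt_19 (lam : ℝ) (hlam : 0 < lam) :
    let f : ℝ → ℝ := fun x => Real.exp (-(lam * x));
    ∃ M : ℝ, M ∈ Set.Ioo (0:ℝ) 1 ∧ f M = M ∧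
      (∀ M' ∈ Set.Ioo (0:ℝ) 1, f M' = M' → M' = M) ∧
      (lam ≤ Real.exp 1 →
        ∀ x : ℝ, 0 ≤ x → Tendsto (fun n => f^[n] x) atTop (nhds M)) ∧
      (lam = Real.exp 1 → M = Real.exp (-1) ∧ HasDerivAt f (-1) M) ∧
      (Real.exp 1 < lam →
        1 < lam * M ∧ HasDerivAt f (-(lam * M)) M ∧
        ∃ L U : ℝ, L < M ∧ M < U ∧ f L = U ∧ f U = L ∧
          ∀ x : ℝ, 0 ≤ x → x ≠ M →
            ((Tendsto (fun n => f^[2*n] x) atTop (nhds L) ∧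
              Tendsto (fun n => f^[2*n+1] x) atTop (nhds U)) ∨
             (Tendsto (fun n => f^[2*n] x) atTop (nhds U) ∧
              Tendsto (fun n => f^[2*n+1] x) atTop (nhds L)))) := by
  intro f
  rw [show f = S19.f lam from rfl]
  obtain ⟨M, hMIoo, hMfix⟩ := exists_M hlam
  refine ⟨M, hMIoo, hMfix, ?_, ?_, ?_, ?_⟩
  · intro M' _ hfix
    exact M_uniq hlam hMfix hfix
  · intro he x _
    exact conv_le hlam he hMfix x
  · intro he
    have hfixE : S19.f lam (Real.exp (-1)) = Real.exp (-1) := by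
      unfold S19.f
      rw [he, ← Real.exp_add]
      norm_num
    have hMe : M = Real.exp (-1) := M_uniq hlam hfixE hMfix
    refine ⟨hMe, ?_⟩
    have h := hasDerivAt_f (lam := lam) M
    rw [hMfix] at h
    have hval : -(lam * M) = -1 := by
      rw [he, hMe, ← Real.exp_add]; norm_num
    rw [hval] at h
    exact h
  · intro he
    have hM0 : 0 < M := hMIoo.1
    have hMl : 1 < lam * M := lamM_gt hlam he hMfix
    have hder : HasDerivAt f (-(lam * M)) M := by
      have h := hasDerivAt_f (lam := lam) M
      rw [hMfix] at h
      exact h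
    obtain ⟨L, U, hL0, hLM, hMU, hfLU, hfUL, s1, s2, s3, s4⟩ :=
      gt_case hlam he hMfix hM0 hMl
    refine ⟨hMl, hder, L, U, hLM, hMU, hfLU, hfUL, ?_⟩
    intro x hx0 hxM
    have hfix2L : S19.f lam (S19.f lam L) = L := by rw [hfLU, hfUL]
    have hfix2U : S19.f lam (S19.f lam U) = U := by rw [hfUL, hfLU]
    rcases lt_or_gt_of_ne hxM with hlt | hgt
    · left
      have heven : Tendsto (fun n => (fun y => S19.f lam (S19.f lam y))^[n] x)
          atTop (nhds L) := by
        apply conv_g2_attract hlam hfix2L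
        · intro c hxc hcL
          exact s1 c (le_trans hx0 hxc) hcL
        · intro c hLc hcx
          exact s2 c hLc (lt_of_le_of_lt hcx hlt)
      constructor
      · simpa only [iter_even] using heven
      · simp only [iter_odd]
        have h1 := ((f_cont (lam := lam)).continuousAt (x := L)).tendsto.comp heven
        rw [hfLU] at h1
        exact h1
    · right
      have heven : Tendsto (fun n => (fun y => S19.f lam (S19.f lam y))^[n] x)
          atTop (nhds U) := by
        apply conv_g2_attract hlam hfix2U
        · intro c hxc hcU
          exact s3 c (lt_of_lt_of_le hgt hxc) hcU
        · intro c hUc _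
          exact s4 c hUc
      constructor
      · simpa only [iter_even] using heven
      · simp only [iter_odd]
        have h1 := ((f_cont (lam := lam)).continuousAt (x := U)).tendsto.comp heven
        rw [hfUL] at h1
        exact h1
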